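/- In a directed graph on the vertex set of literals {x_1,...,x_n, ¬x_1,...,¬x_n}, if there exists a directed cycle containing both x_i and ¬x_i for some i (a 'bicycle'), then there exists a directed path ℓ → ℓ_1 → ... → ℓ_t → ℓ' (a 'pretzel') where each ℓ_j is a literal on variable z_j, the variables z_1,...,z_t are pairwise distinct, and ℓ, ℓ' are literals on variables belonging to {z_1,...,z_t}. -/
import Mathlib


theorem stmt_12 (n : ℕ) (G : (Fin n × Bool) → (Fin n × Bool) → Prop)
    (hbicycle : ∃ (m : ℕ) (c : ℕ → Fin n × Bool), 0 < m ∧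
      (∀ i j, i < m → j < m → c i = c j → i = j) ∧
      (∀ j, j < m → G (c j) (c ((j + 1) % m))) ∧
      ∃ i : Fin n, (∃ j < m, c j = (i, true)) ∧ (∃ j < m, c j = (i, false))) :
    ∃ (t : ℕ) (z : ℕ → Fin n × Bool) (a b : Fin n × Bool),
      1 ≤ t ∧
      (∀ i j, i < t → j < t → (z i).1 = (z j).1 → i = j) ∧
      G a (z 0) ∧ (∀ j, j + 1 < t → G (z j) (z (j + 1))) ∧ G (z (t - 1)) b ∧
      (∃ i < t, (z i).1 = a.1) ∧ (∃ i < t, (z i).1 = b.1) := by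
  classical
  obtain ⟨m, c, hm, hinj, hG, -⟩ := hbicycle
  set d : ℕ → Fin n × Bool := fun j => c (j % m) with hd
  have hper : ∀ x, d (x + m) = d x := fun x => by simp [hd, Nat.add_mod_right]
  have hstep : ∀ x, G (d x) (d (x + 1)) := by
    intro x
    have h1 := hG (x % m) (Nat.mod_lt x hm)
    have h2 : (x % m + 1) % m = (x + 1) % m := Nat.mod_add_mod x m 1
    simpa [hd, h2] using h1
  set good : ℕ → Prop := fun L => ∃ p, ∀ i j, i < L → j < L →
      (d (p + i)).1 = (d (p + j)).1 → i = j with hgood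
  have h1 : good 1 := ⟨0, by omega⟩
  have hnot : ¬ good (m + 1) := by
    rintro ⟨p, hp⟩
    have hpm : d (p + m) = d (p + 0) := by
      rw [Nat.add_zero]; exact hper p
    have := hp 0 m (by omega) (by omega) (by rw [hpm])
    omega
  set w := Nat.findGreatest good m with hw
  have hwle : w ≤ m := Nat.findGreatest_le m
  have h1w : 1 ≤ w := Nat.le_findGreatest hm h1
  have hgw : good w := Nat.findGreatest_spec hm h1
  have hnotw : ¬ good (w + 1) := by
    rcases Nat.lt_or_ge w m with h | h
    · exact Nat.findGreatest_is_greatest (P := good) (n := m) (k := w + 1) (by omega) (by omega)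
    · have : w = m := le_antisymm hwle h
      rw [this]; exact hnot
  obtain ⟨p, hp⟩ := hgw
  set q := p + m with hq
  have hqshift : ∀ i, d (q + i) = d (p + i) := by
    intro i
    have : q + i = p + i + m := by omega
    rw [this, hper]
  have hpq : ∀ i j, i < w → j < w → (d (q + i)).1 = (d (q + j)).1 → i = j := by
    intro i j hi hj h
    exact hp i j hi hj (by rwa [hqshift, hqshift] at h)
  have key : ∀ r, ∃ i j, i < w + 1 ∧ j < w + 1 ∧
      (d (r + i)).1 = (d (r + j)).1 ∧ i ≠ j := by
    intro r
    by_contra hcon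
    push_neg at hcon
    exact hnotw ⟨r, hcon⟩
  refine ⟨w, fun j => d (q + j), d (q - 1), d (q + w), h1w, hpq, ?_, ?_, ?_, ?_, ?_⟩
  · have := hstep (q - 1)
    have e : q - 1 + 1 = q + 0 := by omega
    rwa [e] at this
  · intro j hj
    have := hstep (q + j)
    have e : q + j + 1 = q + (j + 1) := by omega
    rwa [e] at this
  · have := hstep (q + (w - 1))
    have e : q + (w - 1) + 1 = q + w := by omega
    rwa [e] at this
  · obtain ⟨i, j, hi, hj, heq, hne⟩ := key (q - 1)
    rcases Nat.eq_zero_or_pos i with hi0 | hi1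
    · subst hi0
      have ej : q - 1 + j = q + (j - 1) := by omega
      have e0 : q - 1 + 0 = q - 1 := by omega
      rw [ej, e0] at heq
      exact ⟨j - 1, by omega, heq.symm⟩
    · rcases Nat.eq_zero_or_pos j with hj0 | hj1
      · subst hj0
        have ei : q - 1 + i = q + (i - 1) := by omega
        have e0 : q - 1 + 0 = q - 1 := by omega
        rw [ei, e0] at heq
        exact ⟨i - 1, by omega, heq⟩
      · exfalso
        have ei : q - 1 + i = q + (i - 1) := by omega
        have ej : q - 1 + j = q + (j - 1) := by omega
        rw [ei, ej] at heq
        have := hpq (i - 1) (j - 1) (by omega) (by omega) heq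
        omega
  · obtain ⟨i, j, hi, hj, heq, hne⟩ := key q
    rcases Nat.lt_or_ge i w with hiw | hiw
    · rcases Nat.lt_or_ge j w with hjw | hjw
      · exact absurd (hpq i j hiw hjw heq) hne
      · have : j = w := by omega
        subst this
        exact ⟨i, hiw, heq⟩
    · have : i = w := by omega
      subst this
      rcases Nat.lt_or_ge j w with hjw | hjw
      · exact ⟨j, hjw, heq.symm⟩
      · omega
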